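/- Cone replacement lemma. Let A₁, A₂, B₁, B₂ be cochain complexes over an additive category 𝒜 with binary biproducts, let (F₁ : A₁ → B₁, G₁ : B₁ → A₁) and (F₂ : A₂ → B₂, G₂ : B₂ → A₂) be homotopy equivalences, and let f : A₁ → A₂ be a chain map. Then the chain map g := F₂ ∘ f ∘ G₁ : B₁ → B₂ has the property that the mapping cone of f is homotopy equivalent to the mapping cone of g. -/

import Mathlib

open CategoryTheory CategoryTheory.Limits

section Reflection

variable {C D : Type*} [Category C] [Category D] [Preadditive C] [Preadditive D]
  (F : C ⥤ D) [F.Full] [F.Faithful] [F.Additive] {ι : Type*} {c : ComplexShape ι}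

@[simp]
lemma map_preimage_mapHC {K L : HomologicalComplex C c} {i j : ι}
    (g : ((F.mapHomologicalComplex c).obj K).X i ⟶ ((F.mapHomologicalComplex c).obj L).X j) :
    F.map (F.preimage g) = g := F.map_preimage g

/-- Preimage of a chain map under a fully faithful functor applied levelwise. -/
noncomputable def preimageChainMap {K L : HomologicalComplex C c}
    (φ : (F.mapHomologicalComplex c).obj K ⟶ (F.mapHomologicalComplex c).obj L) :
    K ⟶ L where
  f i := F.preimage (φ.f i)
  comm' i j hij := F.map_injective (by
    simp only [Functor.map_comp, map_preimage_mapHC]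
    exact φ.comm i j)

@[simp]
lemma map_preimageChainMap {K L : HomologicalComplex C c}
    (φ : (F.mapHomologicalComplex c).obj K ⟶ (F.mapHomologicalComplex c).obj L) :
    (F.mapHomologicalComplex c).map (preimageChainMap F φ) = φ := by
  ext i
  simp [preimageChainMap]

/-- A homotopy between the images of two chain maps under a fully faithful additive
functor can be reflected to a homotopy between the original maps. -/
noncomputable def preimageHomotopy {K L : HomologicalComplex C c} (a b : K ⟶ L)
    (h : Homotopy ((F.mapHomologicalComplex c).map a) ((F.mapHomologicalComplex c).map b)) :
    Homotopy a b where
  hom i j := F.preimage (h.hom i j)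
  zero i j hij := F.map_injective (by
    rw [map_preimage_mapHC, Functor.map_zero]
    exact h.zero i j hij)
  comm i := F.map_injective (by
    dsimp [dNext, prevD]
    simp only [AddMonoidHom.mk'_apply, Functor.map_add, Functor.map_comp, map_preimage_mapHC]
    have hc := h.comm i
    simp [dNext, prevD] at hc
    exact hc)

/-- A homotopy equivalence between the images of two complexes under a fully
faithful additive functor can be reflected to a homotopy equivalence. -/
noncomputable def preimageHomotopyEquiv {K L : HomologicalComplex C c}
    (h : HomotopyEquiv ((F.mapHomologicalComplex c).obj K)
      ((F.mapHomologicalComplex c).obj L)) : HomotopyEquiv K L where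
  hom := preimageChainMap F h.hom
  inv := preimageChainMap F h.inv
  homotopyHomInvId := preimageHomotopy F _ _ (by
    refine (Homotopy.ofEq ?_).trans (h.homotopyHomInvId.trans (Homotopy.ofEq ?_)) <;>
      simp)
  homotopyInvHomId := preimageHomotopy F _ _ (by
    refine (Homotopy.ofEq ?_).trans (h.homotopyInvHomId.trans (Homotopy.ofEq ?_)) <;>
      simp)

end Reflection

section Embedded

variable {𝒟 : Type*} [Category 𝒟] [Preadditive 𝒟] [HasZeroObject 𝒟] [HasBinaryBiproducts 𝒟]

/-- The cone replacement lemma in a category with a zero object, proved using the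
pretriangulated structure on the homotopy category. -/
noncomputable def coneReplacementOfZero {A₁ A₂ B₁ B₂ : CochainComplex 𝒟 ℤ}
    (e₁ : HomotopyEquiv A₁ B₁) (e₂ : HomotopyEquiv A₂ B₂) (f : A₁ ⟶ A₂) :
    HomotopyEquiv (CochainComplex.mappingCone f)
      (CochainComplex.mappingCone (e₁.inv ≫ f ≫ e₂.hom)) := by
  set g : B₁ ⟶ B₂ := e₁.inv ≫ f ≫ e₂.hom with hg
  have hT₁ := HomotopyCategory.mappingCone_triangleh_distinguished f
  have hT₂ := HomotopyCategory.mappingCone_triangleh_distinguished g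
  have H : Homotopy (e₁.hom ≫ g) (f ≫ e₂.hom) := by
    have := e₁.homotopyHomInvId.compRight (f ≫ e₂.hom)
    simpa [hg] using this
  have comm : (CochainComplex.mappingCone.triangleh f).mor₁ ≫
        (HomotopyCategory.isoOfHomotopyEquiv e₂).hom =
      (HomotopyCategory.isoOfHomotopyEquiv e₁).hom ≫
        (CochainComplex.mappingCone.triangleh g).mor₁ := by
    dsimp [HomotopyCategory.isoOfHomotopyEquiv, CochainComplex.mappingCone.triangleh]
    change (HomotopyCategory.quotient _ _).map f ≫ _ = _ ≫ (HomotopyCategory.quotient _ _).map g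
    rw [← Functor.map_comp, ← Functor.map_comp]
    exact HomotopyCategory.eq_of_homotopy _ _ H.symm
  have iso := Pretriangulated.isoTriangleOfIso₁₂ _ _ hT₁ hT₂
    (HomotopyCategory.isoOfHomotopyEquiv e₁) (HomotopyCategory.isoOfHomotopyEquiv e₂) comm
  exact HomotopyCategory.homotopyEquivOfIso
    ((Pretriangulated.Triangle.π₃.mapIso iso : _ ≅ _))

end Embedded

instance preadditiveYoneda_additive {𝒜 : Type*} [Category 𝒜] [Preadditive 𝒜] :
    (preadditiveYoneda : 𝒜 ⥤ _).Additive where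
  map_add := by intros; ext; simp [preadditiveYoneda, Preadditive.comp_add]; erw [AddCommGrpCat.hom_add_apply]; exact Preadditive.comp_add _ _ _ _ _ _

set_option maxHeartbeats 1000000 in
/-- **Statement 12** (Cone replacement lemma). Let `A₁, A₂, B₁, B₂` be cochain complexes
over an additive category `𝒜` with binary biproducts, let `e₁ : A₁ ≃ B₁` and
`e₂ : A₂ ≃ B₂` be homotopy equivalences and `f : A₁ ⟶ A₂` a chain map. Then the mapping
cone of `f` is homotopy equivalent to the mapping cone of
`g = F₂ ∘ f ∘ G₁ = e₁.inv ≫ f ≫ e₂.hom : B₁ ⟶ B₂`. -/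
theorem cone_replacement {𝒜 : Type*} [Category 𝒜] [Preadditive 𝒜]
    [HasBinaryBiproducts 𝒜] {A₁ A₂ B₁ B₂ : CochainComplex 𝒜 ℤ}
    (e₁ : HomotopyEquiv A₁ B₁) (e₂ : HomotopyEquiv A₂ B₂) (f : A₁ ⟶ A₂) :
    Nonempty (HomotopyEquiv (CochainComplex.mappingCone f)
      (CochainComplex.mappingCone (e₁.inv ≫ f ≫ e₂.hom))) := by
  set g : B₁ ⟶ B₂ := e₁.inv ≫ f ≫ e₂.hom with hg
  -- embed into presheaves of abelian groups
  let F := (preadditiveYoneda : 𝒜 ⥤ _)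
  let Φ := F.mapHomologicalComplex (ComplexShape.up ℤ)
  -- homotopy equivalence between the cones of the images
  have h₀ : HomotopyEquiv (CochainComplex.mappingCone (Φ.map f))
      (CochainComplex.mappingCone
        ((F.mapHomotopyEquiv e₁).inv ≫ (Φ.map f) ≫ (F.mapHomotopyEquiv e₂).hom)) :=
    coneReplacementOfZero (F.mapHomotopyEquiv e₁) (F.mapHomotopyEquiv e₂) (Φ.map f)
  have hΦg : Φ.map g = (F.mapHomotopyEquiv e₁).inv ≫ Φ.map f ≫ (F.mapHomotopyEquiv e₂).hom := by
    simp [hg, Functor.mapHomotopyEquiv, Φ]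
  rw [← hΦg] at h₀
  -- transport along the comparison isomorphisms
  have h₁ : HomotopyEquiv (Φ.obj (CochainComplex.mappingCone f))
      (Φ.obj (CochainComplex.mappingCone g)) :=
    (HomotopyEquiv.ofIso (CochainComplex.mappingCone.mapHomologicalComplexIso f F)).trans
      (h₀.trans (HomotopyEquiv.ofIso
        (CochainComplex.mappingCone.mapHomologicalComplexIso g F).symm))
  exact ⟨preimageHomotopyEquiv F h₁⟩
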